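/- Let I = (a,b) be a bounded interval, γ ∈ ℝ, and let u_s : I → [0,∞) be bounded measurable. For p = 1 define A(I; u_s, γ) := |γ| sup_{‖f‖ ≤ 1, f a finite measure} inf_{α ∈ ℝ} ‖∫_a^x u_s df − α‖_{1,I} (equivalently the L¹ approximation quantity including point masses). Then A(I; u_s, γ) ≥ (1/4) |γ| · sup_{t ∈ (0, |I|)} t · (u_s χ_I)^*(t), where g^* denotes the non-increasing rearrangement of g. -/

import Mathlib

open MeasureTheory ENNReal

/-- The `L¹` Hardy best-approximation functional with constant `v = γ`, where test "functions"
are (finite, positive) measures `ρ` of total mass at most one (this includes point masses):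
`A(I; u, γ) = |γ| · sup_{ρ(ℝ) ≤ 1} inf_{α ∈ ℝ} ‖(∫_{(a,x] ∩ S} u dρ) − α‖_{1,S}`. -/
noncomputable def hardyA1M (a : ℝ) (S : Set ℝ) (u : ℝ → ℝ) (γ : ℝ) : ℝ≥0∞ :=
  ENNReal.ofReal |γ| *
    ⨆ (ρ : Measure ℝ) (_ : ρ Set.univ ≤ 1),
      ⨅ α : ℝ, eLpNorm (fun x => (∫ t in Set.Ioc a x ∩ S, u t ∂ρ) - α) 1 (volume.restrict S)

/-- The distribution function `g_*(t) = |{x ∈ S : g(x) ≥ t}|`. -/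
noncomputable def distFn (S : Set ℝ) (g : ℝ → ℝ) (t : ℝ) : ℝ :=
  (volume {x ∈ S | t ≤ g x}).toReal

/-- The non-increasing rearrangement `g^*(x) = inf {t ≥ 0 : g_*(t) ≤ x}`. -/
noncomputable def rearr (S : Set ℝ) (g : ℝ → ℝ) (x : ℝ) : ℝ :=
  sInf {t : ℝ | 0 ≤ t ∧ distFn S g t ≤ x}

/-- (Case `p = 1`.) For bounded measurable `u_s ≥ 0` on a bounded interval
`I = (a,b)`, `A(I; u_s, γ) ≥ (1/4)|γ| · sup_{t ∈ (0,|I|)} t · (u_s χ_I)^*(t)`. -/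

theorem stmt_8_aux (a b : ℝ) (hab : a < b) (γ : ℝ) (us : ℝ → ℝ) (hmeas : Measurable us)
    (hbd : ∃ C : ℝ, ∀ t ∈ Set.Ioo a b, 0 ≤ us t ∧ us t ≤ C) :
    ∀ t ∈ Set.Ioo (0 : ℝ) (b - a),
      ENNReal.ofReal (|γ| / 4 * (t * (sInf {s : ℝ | 0 ≤ s ∧ (volume {x ∈ Set.Ioo a b | s ≤ us x}).toReal ≤ t})))
        ≤ ENNReal.ofReal |γ| *
    ⨆ (ρ : Measure ℝ) (_ : ρ Set.univ ≤ 1),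
      ⨅ α : ℝ, eLpNorm (fun x => (∫ s in Set.Ioc a x ∩ Set.Ioo a b, us s ∂ρ) - α) 1
        (volume.restrict (Set.Ioo a b)) := by
  rintro t ⟨ht0, htb⟩
  set S := Set.Ioo a b with hS
  set β := sInf {s : ℝ | 0 ≤ s ∧ (volume {x ∈ S | s ≤ us x}).toReal ≤ t} with hβ
  rcases le_or_gt β 0 with hβ0 | hβ0
  · have h1 : t * β ≤ 0 := mul_nonpos_iff.mpr (Or.inl ⟨le_of_lt ht0, hβ0⟩)
    have h4 : (0:ℝ) ≤ |γ| / 4 := by positivity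
    have : |γ| / 4 * (t * β) ≤ 0 := mul_nonpos_iff.mpr (Or.inl ⟨h4, h1⟩)
    simp [ENNReal.ofReal_of_nonpos this]
  -- main case
  have hβ' : ¬ ((0:ℝ) ≤ β / 2 ∧ (volume {x ∈ S | β / 2 ≤ us x}).toReal ≤ t) := by
    intro hmem
    have hbdd : BddBelow {s : ℝ | 0 ≤ s ∧ (volume {x ∈ S | s ≤ us x}).toReal ≤ t} :=
      ⟨0, fun s hs => hs.1⟩
    have := csInf_le hbdd hmem
    linarith
  have hMt : t < (volume {x ∈ S | β / 2 ≤ us x}).toReal := by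
    by_contra h
    exact hβ' ⟨by linarith, le_of_not_gt h⟩
  set M := {x ∈ S | β / 2 ≤ us x} with hM
  -- find y ∈ M ∩ Icc (a + t/2) (b - t/2)
  obtain ⟨y, hyM, hyJ⟩ : ∃ y, y ∈ M ∧ y ∈ Set.Icc (a + t/2) (b - t/2) := by
    by_contra h
    push_neg at h
    have hsub : M ⊆ Set.Ioo a (a + t/2) ∪ Set.Ioo (b - t/2) b := by
      intro x hx
      have hxS : x ∈ Set.Ioo a b := hx.1
      have hxJ := h x hx
      rw [Set.mem_Icc] at hxJ
      push_neg at hxJ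
      rcases lt_or_ge x (a + t/2) with h1 | h1
      · exact Or.inl ⟨hxS.1, h1⟩
      · exact Or.inr ⟨hxJ h1, hxS.2⟩
    have hv : volume M ≤ ENNReal.ofReal t := by
      calc volume M ≤ volume (Set.Ioo a (a + t/2)) + volume (Set.Ioo (b - t/2) b) :=
            le_trans (measure_mono hsub) (measure_union_le _ _)
        _ = ENNReal.ofReal (t/2) + ENNReal.ofReal (t/2) := by
            rw [Real.volume_Ioo, Real.volume_Ioo]; ring_nf
        _ = ENNReal.ofReal t := by
            rw [← ENNReal.ofReal_add (by linarith) (by linarith)]; ring_nf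
    have := ENNReal.toReal_mono (by simp) hv
    rw [ENNReal.toReal_ofReal (le_of_lt ht0)] at this
    linarith
  have hyS : y ∈ Set.Ioo a b := hyM.1
  have hyu : β / 2 ≤ us y := hyM.2
  have hya : a + t/2 ≤ y := hyJ.1
  have hyb : y ≤ b - t/2 := hyJ.2
  -- use ρ = dirac y
  have hdirac : (Measure.dirac y) Set.univ ≤ 1 := by simp
  have key : ∀ α : ℝ, ENNReal.ofReal (us y * (t/2)) ≤
      eLpNorm (fun x => (∫ s in Set.Ioc a x ∩ S, us s ∂(Measure.dirac y)) - α) 1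
        (volume.restrict S) := by
    intro α
    -- per-α lower bound
    classical
    have hFx : ∀ x : ℝ, (∫ s in Set.Ioc a x ∩ S, us s ∂(Measure.dirac y)) =
        if y ∈ Set.Ioc a x ∩ S then us y else 0 := fun x => setIntegral_dirac us y _
    rw [eLpNorm_one_eq_lintegral_enorm]
    have hsplit : ∫⁻ x in Set.Ioo a y ∪ Set.Ico y b,
        (‖(∫ s in Set.Ioc a x ∩ S, us s ∂(Measure.dirac y)) - α‖₊ : ℝ≥0∞)
        ∂(volume.restrict S) ≤ _ :=
      setLIntegral_le_lintegral _ _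
    refine le_trans ?_ hsplit
    rw [lintegral_union measurableSet_Ico
      (Set.disjoint_left.mpr fun x hx hx' => absurd (hx.2.trans_le hx'.1) (lt_irrefl _))]
    have hA : (volume.restrict S).restrict (Set.Ioo a y) = volume.restrict (Set.Ioo a y) := by
      rw [Measure.restrict_restrict measurableSet_Ioo]
      congr 1
      rw [Set.inter_eq_left]
      intro x hx
      exact ⟨hx.1, lt_of_lt_of_le hx.2 (by linarith)⟩
    have hB : (volume.restrict S).restrict (Set.Ico y b) = volume.restrict (Set.Ico y b) := by
      rw [Measure.restrict_restrict measurableSet_Ico]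
      congr 1
      rw [Set.inter_eq_left]
      intro x hx
      exact ⟨lt_of_lt_of_le hyS.1 hx.1, hx.2⟩
    rw [hA, hB]
    have hIA : ∫⁻ x in Set.Ioo a y,
        (‖(∫ s in Set.Ioc a x ∩ S, us s ∂(Measure.dirac y)) - α‖₊ : ℝ≥0∞) =
        ENNReal.ofReal |α| * volume (Set.Ioo a y) := by
      rw [setLIntegral_congr_fun_ae measurableSet_Ioo (MeasureTheory.ae_of_all _
        (fun x hx => ?_)), setLIntegral_const]
      rw [hFx x, if_neg, zero_sub, ← enorm_eq_nnnorm, enorm_neg, Real.enorm_eq_ofReal_abs]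
      rintro ⟨⟨_, hyx⟩, _⟩
      exact absurd (lt_of_le_of_lt hyx hx.2) (lt_irrefl _)
    have hIB : ∫⁻ x in Set.Ico y b,
        (‖(∫ s in Set.Ioc a x ∩ S, us s ∂(Measure.dirac y)) - α‖₊ : ℝ≥0∞) =
        ENNReal.ofReal |us y - α| * volume (Set.Ico y b) := by
      rw [setLIntegral_congr_fun_ae measurableSet_Ico (MeasureTheory.ae_of_all _
        (fun x hx => ?_)), setLIntegral_const]
      rw [hFx x, if_pos ⟨⟨hyS.1, hx.1⟩, hyS⟩, ← enorm_eq_nnnorm, Real.enorm_eq_ofReal_abs]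
    rw [hIA, hIB, Real.volume_Ioo, Real.volume_Ico]
    have ht2 : (0:ℝ) ≤ t/2 := by linarith
    calc ENNReal.ofReal (us y * (t/2))
        ≤ ENNReal.ofReal ((|α| + |us y - α|) * (t/2)) := by
          apply ENNReal.ofReal_le_ofReal
          have h1 : us y ≤ |α| + |us y - α| :=
            calc us y = α + (us y - α) := by ring
              _ ≤ |α + (us y - α)| := le_abs_self _
              _ ≤ |α| + |us y - α| := abs_add_le _ _
          nlinarith
      _ = ENNReal.ofReal |α| * ENNReal.ofReal (t/2)
          + ENNReal.ofReal |us y - α| * ENNReal.ofReal (t/2) := by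
          rw [add_mul, ENNReal.ofReal_add (by positivity) (by positivity),
            ENNReal.ofReal_mul (abs_nonneg _), ENNReal.ofReal_mul (abs_nonneg _)]
      _ ≤ ENNReal.ofReal |α| * ENNReal.ofReal (y - a)
          + ENNReal.ofReal |us y - α| * ENNReal.ofReal (b - y) := by
          gcongr <;> [linarith; linarith]
  calc ENNReal.ofReal (|γ| / 4 * (t * β))
      ≤ ENNReal.ofReal |γ| * ENNReal.ofReal (us y * (t/2)) := by
        rw [← ENNReal.ofReal_mul (abs_nonneg γ)]
        apply ENNReal.ofReal_le_ofReal
        have h0 : 0 ≤ |γ| := abs_nonneg γ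
        nlinarith [mul_nonneg (mul_nonneg h0 ht0.le)
          (by linarith : (0:ℝ) ≤ us y - β / 2)]
    _ ≤ ENNReal.ofReal |γ| * ⨅ α : ℝ,
          eLpNorm (fun x => (∫ s in Set.Ioc a x ∩ S, us s ∂(Measure.dirac y)) - α) 1
            (volume.restrict S) := mul_le_mul_right (le_iInf key) _
    _ ≤ ENNReal.ofReal |γ| * ⨆ (ρ : Measure ℝ) (_ : ρ Set.univ ≤ 1), ⨅ α : ℝ,
          eLpNorm (fun x => (∫ s in Set.Ioc a x ∩ S, us s ∂ρ) - α) 1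
            (volume.restrict S) :=
        mul_le_mul_right (le_iSup₂ (f := fun ρ _ => ⨅ α : ℝ,
          eLpNorm (fun x => (∫ s in Set.Ioc a x ∩ S, us s ∂ρ) - α) 1 (volume.restrict S))
          (Measure.dirac y) hdirac) _


theorem stmt_8 (a b : ℝ) (hab : a < b) (γ : ℝ) (us : ℝ → ℝ) (hmeas : Measurable us)
    (hbd : ∃ C : ℝ, ∀ t ∈ Set.Ioo a b, 0 ≤ us t ∧ us t ≤ C) :
    ∀ t ∈ Set.Ioo (0 : ℝ) (b - a),
      ENNReal.ofReal (|γ| / 4 * (t * rearr (Set.Ioo a b) us t))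
        ≤ hardyA1M a (Set.Ioo a b) us γ := by
  intro t ht
  simp only [hardyA1M, rearr, distFn]
  exact stmt_8_aux a b hab γ us hmeas hbd t ht
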